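/- Suppose the primal and dual condition numbers δ_P and δ_D of the LP are both positive, let (x*, u*) be a primal–dual optimal pair with C_* := max(‖x* − x̄‖, ‖u* − ū‖), and suppose β ≥ 10 C_* / (‖d‖ min(δ_P, δ_D)). Then |c^T x* − c^T x(β)| ≤ (1/β)[25 C_*/(2 δ_P δ_D) + 6 C_*² + √6 ‖x̄‖ C_*]. -/

import Mathlib

open Matrix Finset MeasureTheory ProbabilityTheory

/-- Euclidean norm of a finitely-indexed real vector. -/
noncomputable def l2norm {ι : Type*} [Fintype ι] (x : ι → ℝ) : ℝ :=
  Real.sqrt (∑ i, (x i) ^ 2)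

/-- Frobenius norm of a real matrix. -/
noncomputable def frobNorm {ι κ : Type*} [Fintype ι] [Fintype κ] (A : Matrix ι κ ℝ) : ℝ :=
  Real.sqrt (∑ i, ∑ j, (A i j) ^ 2)

/-- Euclidean inner product. -/
noncomputable def rdot {ι : Type*} [Fintype ι] (a b : ι → ℝ) : ℝ := ∑ i, a i * b i

/-- The regularized quadratic penalty objective
`f_β(x) = cᵀx − ūᵀ(Ax−b) + (β/2)‖Ax−b‖² + (1/(2β))‖x−x̄‖²`. -/
noncomputable def fpen {ι κ : Type*} [Fintype ι] [Fintype κ]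
    (A : Matrix ι κ ℝ) (b : ι → ℝ) (c : κ → ℝ) (ub : ι → ℝ) (xb : κ → ℝ)
    (β : ℝ) (x : κ → ℝ) : ℝ :=
  rdot c x - rdot ub (A.mulVec x - b) + (β / 2) * l2norm (A.mulVec x - b) ^ 2
    + (1 / (2 * β)) * l2norm (x - xb) ^ 2

/-- Feasibility of the standard-form primal LP `Ax = b, x ≥ 0`. -/
def PrimalFeasible {ι κ : Type*} [Fintype ι] [Fintype κ]
    (A : Matrix ι κ ℝ) (b : ι → ℝ) : Prop :=
  ∃ x : κ → ℝ, (∀ j, 0 ≤ x j) ∧ A.mulVec x = b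

/-- Feasibility of the dual LP `Aᵀu ≤ c`. -/
def DualFeasible {ι κ : Type*} [Fintype ι] [Fintype κ]
    (A : Matrix ι κ ℝ) (c : κ → ℝ) : Prop :=
  ∃ u : ι → ℝ, ∀ j, Aᵀ.mulVec u j ≤ c j

/-- Norm of the data `d = (A, b, c)`: `max(‖A‖_F, ‖b‖₂, ‖c‖₂)`. -/
noncomputable def dnorm {ι κ : Type*} [Fintype ι] [Fintype κ]
    (A : Matrix ι κ ℝ) (b : ι → ℝ) (c : κ → ℝ) : ℝ :=
  max (frobNorm A) (max (l2norm b) (l2norm c))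

/-- Distance of the data to primal infeasibility. -/
noncomputable def distPri {ι κ : Type*} [Fintype ι] [Fintype κ]
    (A : Matrix ι κ ℝ) (b : ι → ℝ) (c : κ → ℝ) : ℝ :=
  sInf { r : ℝ | ∃ (dA : Matrix ι κ ℝ) (db : ι → ℝ) (dc : κ → ℝ),
    ¬ PrimalFeasible (A + dA) (b + db) ∧ r = dnorm dA db dc }

/-- Distance of the data to dual infeasibility. -/
noncomputable def distDual {ι κ : Type*} [Fintype ι] [Fintype κ]
    (A : Matrix ι κ ℝ) (b : ι → ℝ) (c : κ → ℝ) : ℝ :=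
  sInf { r : ℝ | ∃ (dA : Matrix ι κ ℝ) (db : ι → ℝ) (dc : κ → ℝ),
    ¬ DualFeasible (A + dA) (c + dc) ∧ r = dnorm dA db dc }

/-- Renegar primal condition number `δ_P`. -/
noncomputable def deltaP {ι κ : Type*} [Fintype ι] [Fintype κ]
    (A : Matrix ι κ ℝ) (b : ι → ℝ) (c : κ → ℝ) : ℝ := distPri A b c / dnorm A b c

/-- Renegar dual condition number `δ_D`. -/
noncomputable def deltaD {ι κ : Type*} [Fintype ι] [Fintype κ]
    (A : Matrix ι κ ℝ) (b : ι → ℝ) (c : κ → ℝ) : ℝ := distDual A b c / dnorm A b c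

section AuxLemmas
variable {ι κ : Type*} [Fintype ι] [Fintype κ]

lemma l2norm_nonneg (x : ι → ℝ) : 0 ≤ l2norm x := Real.sqrt_nonneg _

lemma l2norm_sq (x : ι → ℝ) : l2norm x ^ 2 = ∑ i, x i ^ 2 :=
  Real.sq_sqrt (Finset.sum_nonneg fun i _ => sq_nonneg _)

lemma l2norm_zero : l2norm (0 : ι → ℝ) = 0 := by simp [l2norm]

lemma rdot_comm (a b : ι → ℝ) : rdot a b = rdot b a := by
  simp [rdot, mul_comm]

lemma abs_rdot_le (a b : ι → ℝ) : |rdot a b| ≤ l2norm a * l2norm b := by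
  have h := Finset.sum_mul_sq_le_sq_mul_sq Finset.univ a b
  have h2 : |rdot a b| ^ 2 ≤ (l2norm a * l2norm b) ^ 2 := by
    rw [sq_abs, mul_pow, l2norm_sq, l2norm_sq]; exact h
  exact (abs_le_of_sq_le_sq' h2 (mul_nonneg (l2norm_nonneg a) (l2norm_nonneg b))).2

lemma rdot_le (a b : ι → ℝ) : rdot a b ≤ l2norm a * l2norm b :=
  (le_abs_self _).trans (abs_rdot_le a b)

lemma l2norm_neg_sub (a b : ι → ℝ) : l2norm (a - b) = l2norm (b - a) := by
  unfold l2norm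
  congr 1
  apply Finset.sum_congr rfl
  intro i _
  have h : (a - b) i = -((b - a) i) := by simp
  rw [h]
  ring

lemma rdot_sub_left (a b x : ι → ℝ) : rdot (a - b) x = rdot a x - rdot b x := by
  simp [rdot, sub_mul, Finset.sum_sub_distrib]

lemma rdot_mulVec (M : Matrix ι κ ℝ) (u : ι → ℝ) (x : κ → ℝ) :
    rdot u (M.mulVec x) = rdot (Mᵀ.mulVec u) x := by
  simp only [rdot, Matrix.mulVec, dotProduct, Matrix.transpose_apply,
    Finset.mul_sum, Finset.sum_mul]
  rw [Finset.sum_comm]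
  apply Finset.sum_congr rfl; intro j _
  apply Finset.sum_congr rfl; intro i _
  ring

lemma l2norm_smul (t : ℝ) (x : ι → ℝ) (ht : 0 ≤ t) :
    l2norm (fun i => t * x i) = t * l2norm x := by
  unfold l2norm
  have h : ∑ i, (t * x i) ^ 2 = t ^ 2 * ∑ i, x i ^ 2 := by
    rw [Finset.mul_sum]
    exact Finset.sum_congr rfl fun i _ => by ring
  rw [h, Real.sqrt_mul (sq_nonneg t), Real.sqrt_sq ht]

lemma frobNorm_nonneg (A : Matrix ι κ ℝ) : 0 ≤ frobNorm A := Real.sqrt_nonneg _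

lemma dnorm_nonneg (A : Matrix ι κ ℝ) (b : ι → ℝ) (c : κ → ℝ) : 0 ≤ dnorm A b c :=
  le_trans (frobNorm_nonneg A) (le_max_left _ _)

lemma distPri_le (A dA : Matrix ι κ ℝ) (b db : ι → ℝ) (c dc : κ → ℝ)
    (h : ¬ PrimalFeasible (A + dA) (b + db)) :
    distPri A b c ≤ dnorm dA db dc := by
  apply csInf_le
  · exact ⟨0, fun r ⟨dA', db', dc', _, hr⟩ => hr ▸ dnorm_nonneg dA' db' dc'⟩
  · exact ⟨dA, db, dc, h, rfl⟩

lemma distDual_le (A dA : Matrix ι κ ℝ) (b db : ι → ℝ) (c dc : κ → ℝ)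
    (h : ¬ DualFeasible (A + dA) (c + dc)) :
    distDual A b c ≤ dnorm dA db dc := by
  apply csInf_le
  · exact ⟨0, fun r ⟨dA', db', dc', _, hr⟩ => hr ▸ dnorm_nonneg dA' db' dc'⟩
  · exact ⟨dA, db, dc, h, rfl⟩

lemma frobNorm_rank_one (u : ι → ℝ) (v : κ → ℝ) (s : ℝ) (hs : 0 ≤ s) :
    frobNorm (fun i j => s * (u i * v j) : Matrix ι κ ℝ) = s * (l2norm u * l2norm v) := by
  unfold frobNorm l2norm
  have h : ∑ i, ∑ j, (s * (u i * v j)) ^ 2 = s ^ 2 * ((∑ i, u i ^ 2) * ∑ j, v j ^ 2) := by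
    rw [Finset.sum_mul_sum, Finset.mul_sum]
    refine Finset.sum_congr rfl fun i _ => ?_
    rw [Finset.mul_sum]
    refine Finset.sum_congr rfl fun j _ => ?_
    ring
  rw [h, Real.sqrt_mul (sq_nonneg s), Real.sqrt_sq hs,
    Real.sqrt_mul (Finset.sum_nonneg fun i _ => sq_nonneg _)]

lemma l2norm_neg (x : ι → ℝ) : l2norm (fun i => -x i) = l2norm x := by
  unfold l2norm; congr 1; exact Finset.sum_congr rfl fun i _ => by ring

lemma frobNorm_neg (A : Matrix ι κ ℝ) : frobNorm (-A) = frobNorm A := by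
  unfold frobNorm; congr 1
  refine Finset.sum_congr rfl fun i _ => Finset.sum_congr rfl fun j _ => by
    simp [Matrix.neg_apply]

lemma l2norm_add_le (a b : ι → ℝ) : l2norm (a + b) ≤ l2norm a + l2norm b := by
  have hsq : l2norm (a + b) ^ 2 ≤ (l2norm a + l2norm b) ^ 2 := by
    have h1 : l2norm (a + b) ^ 2 = (∑ i, a i ^ 2) + 2 * rdot a b + ∑ i, b i ^ 2 := by
      rw [l2norm_sq]
      rw [show ∑ i, (a + b) i ^ 2 = ∑ i, (a i ^2 + 2*(a i * b i) + b i ^2) from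
        Finset.sum_congr rfl fun i _ => by simp [Pi.add_apply]; ring]
      simp [Finset.sum_add_distrib, rdot, Finset.mul_sum]
    have h2 := rdot_le a b
    have := l2norm_sq a; have := l2norm_sq b
    nlinarith [l2norm_nonneg a, l2norm_nonneg b]
  have := abs_le_of_sq_le_sq' hsq
    (by have := l2norm_nonneg a; have := l2norm_nonneg b; linarith)
  calc l2norm (a + b) ≤ |l2norm (a+b)| := le_abs_self _
    _ ≤ l2norm a + l2norm b := by
        rw [abs_of_nonneg (l2norm_nonneg _)]; exact this.2

lemma distDual_le_two_dnorm [Nonempty κ] (A : Matrix ι κ ℝ) (b : ι → ℝ) (c : κ → ℝ)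
    (hD : 0 < distDual A b c) : distDual A b c ≤ 2 * dnorm A b c := by
  classical
  set D := distDual A b c with hDdef
  set j0 : κ := Classical.arbitrary κ
  set v : κ → ℝ := fun j => if j = j0 then -(D/2) else 0 with hv
  set dc : κ → ℝ := v - c with hdc
  have hinf : ¬ DualFeasible (A + (-A)) (c + dc) := by
    rintro ⟨u, hu⟩
    have h1 := hu j0
    have hz : (A + (-A))ᵀ.mulVec u j0 = 0 := by
      simp [Matrix.mulVec, dotProduct]
    rw [hz] at h1
    have h2 : (c + dc) j0 = -(D/2) := by simp [hdc, hv]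
    rw [h2] at h1
    linarith
  have h := distDual_le A (-A) b 0 c dc hinf
  have hvn : l2norm v = D / 2 := by
    unfold l2norm
    have hterm : ∀ j : κ, (if j = j0 then -(D/2) else 0)^2
        = (if j = j0 then (D/2)^2 else (0:ℝ)) := by
      intro j; by_cases h : j = j0 <;> simp [h]
    have : ∑ j, v j ^ 2 = (D/2)^2 := by
      rw [hv]; simp only [hterm]; simp
    rw [this, Real.sqrt_sq (by linarith)]
  have hdcn : l2norm dc ≤ l2norm c + D / 2 := by
    have : dc = v + (fun j => -(c j)) := by
      funext j; simp [hdc, sub_eq_add_neg]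
    rw [this]
    calc l2norm (v + fun j => -(c j)) ≤ l2norm v + l2norm (fun j => -(c j)) :=
          l2norm_add_le _ _
      _ = l2norm c + D/2 := by rw [hvn, l2norm_neg]; ring
  have hfro : frobNorm (-A) ≤ dnorm A b c := by
    rw [frobNorm_neg]; exact le_max_left _ _
  have hcN : l2norm c ≤ dnorm A b c := (le_max_right _ _).trans (le_max_right _ _)
  have h0N : (0:ℝ) ≤ dnorm A b c := dnorm_nonneg A b c
  have hdn : dnorm (-A) 0 dc ≤ dnorm A b c + D/2 := by
    have e : dnorm (-A) 0 dc
        = max (frobNorm (-A)) (max (l2norm (0 : ι → ℝ)) (l2norm dc)) := rfl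
    rw [e]
    apply max_le (by linarith)
    apply max_le (by rw [l2norm_zero]; linarith) (by linarith)
  have : D ≤ dnorm A b c + D/2 := h.trans hdn
  linarith

lemma primal_step (A : Matrix ι κ ℝ) (b : ι → ℝ) (c : κ → ℝ) (us : ι → ℝ)
    (hdfeas : ∀ j, 0 ≤ (c - Aᵀ.mulVec us) j)
    (hQ : 0 < ∑ i, us i ^ 2) (ε : ℝ) (hε : 0 < ε)
    (hpos : 0 < rdot us b + ε * (∑ i, us i ^ 2)) :
    distPri A b c ≤ max (l2norm c / l2norm us) (ε * l2norm us) := by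
  classical
  set Q : ℝ := ∑ i, us i ^ 2 with hQdef
  have husn : 0 < l2norm us := Real.sqrt_pos.mpr hQ
  set dA : Matrix ι κ ℝ := fun i j => (1/Q) * (us i * (-(c j))) with hdA
  set db : ι → ℝ := fun i => ε * us i with hdb
  have hinf : ¬ PrimalFeasible (A + dA) (b + db) := by
    rintro ⟨x, hx0, hxe⟩
    have e1 : rdot us ((A + dA).mulVec x) = rdot us b + ε * Q := by
      rw [hxe]
      have : ∀ i, us i * (b + db) i = us i * b i + ε * us i ^ 2 := by
        intro i; simp [hdb]; ring
      simp only [rdot, this, Finset.sum_add_distrib]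
      rw [← Finset.mul_sum]
    have hC : ∀ j, ((A + dA)ᵀ.mulVec us) j ≤ c j - c j := by
      intro j
      have hcomp : ((A + dA)ᵀ.mulVec us) j = (Aᵀ.mulVec us) j - c j := by
        simp only [Matrix.mulVec, dotProduct, Matrix.transpose_apply,
          Matrix.add_apply]
        simp only [hdA]
        have : ∀ i, (A i j + 1/Q * (us i * -c j)) * us i
            = A i j * us i - (1/Q * c j) * us i ^ 2 := by intro i; ring
        simp only [this, Finset.sum_sub_distrib, ← Finset.mul_sum]
        rw [← hQdef]
        field_simp
      have hj := hdfeas j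
      simp only [Pi.sub_apply] at hj
      rw [hcomp]; linarith
    have e2 : rdot us ((A + dA).mulVec x) ≤ 0 := by
      rw [rdot_mulVec]
      apply Finset.sum_nonpos
      intro j _
      have := hC j
      exact mul_nonpos_of_nonpos_of_nonneg (by linarith) (hx0 j)
    rw [e1] at e2
    linarith
  have h := distPri_le A dA b db c 0 hinf
  have hfro : frobNorm dA = l2norm c / l2norm us := by
    rw [hdA, frobNorm_rank_one us (fun j => -(c j)) (1/Q) (by positivity), l2norm_neg]
    have : Q = l2norm us ^ 2 := (l2norm_sq us).symm
    rw [this]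
    field_simp
  have hdbn : l2norm db = ε * l2norm us := l2norm_smul ε us hε.le
  have hdn : dnorm dA db 0 = max (l2norm c / l2norm us) (ε * l2norm us) := by
    have e : dnorm dA db 0
        = max (frobNorm dA) (max (l2norm db) (l2norm (0 : κ → ℝ))) := rfl
    rw [e, hfro, hdbn, l2norm_zero]
    congr 1
    exact max_eq_left (by positivity)
  rw [hdn] at h
  exact h

lemma norm_dual_opt_le (A : Matrix ι κ ℝ) (b : ι → ℝ) (c : κ → ℝ)
    (xs : κ → ℝ) (us : ι → ℝ)
    (hpfeas : A.mulVec xs = b) (hppos : ∀ j, 0 ≤ xs j)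
    (hdfeas : ∀ j, 0 ≤ (c - Aᵀ.mulVec us) j)
    (hstrong : rdot c xs = rdot b us)
    (hP0 : 0 < distPri A b c) (hD0 : 0 < distDual A b c)
    (hD2N : distDual A b c ≤ 2 * dnorm A b c) :
    l2norm us * (distPri A b c * distDual A b c) ≤ 2 * dnorm A b c ^ 2 := by
  classical
  set N := dnorm A b c with hNdef
  set P := distPri A b c with hPdef
  set D := distDual A b c with hDdef
  have hN0 : 0 ≤ N := dnorm_nonneg A b c
  have hbN : l2norm b ≤ N := (le_max_left _ _).trans (le_max_right _ _)
  have hcN : l2norm c ≤ N := (le_max_right _ _).trans (le_max_right _ _)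
  rcases eq_or_lt_of_le (l2norm_nonneg us) with h0 | hus
  · rw [← h0]; nlinarith
  have hQ : 0 < ∑ i, us i ^ 2 := by
    by_contra hq
    push_neg at hq
    have : (∑ i, us i ^ 2) = 0 :=
      le_antisymm hq (Finset.sum_nonneg fun i _ => sq_nonneg _)
    have : l2norm us = 0 := by rw [l2norm]; rw [this]; simp
    linarith
  set F := rdot b us with hFdef
  have husb : rdot us b = F := rdot_comm us b
  -- helper to finish from `l2norm us * P ≤ K`
  have finish1 : l2norm us * P ≤ N → l2norm us * (P * D) ≤ 2 * N ^ 2 := by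
    intro hK
    calc l2norm us * (P * D) = (l2norm us * P) * D := by ring
      _ ≤ N * (2 * N) := by
          apply mul_le_mul hK hD2N hD0.le hN0
      _ = 2 * N ^ 2 := by ring
  rcases le_or_gt 0 F with hF | hF
  · -- case F ≥ 0
    have hstep := primal_step A b c us hdfeas hQ (P / (2 * l2norm us))
      (by positivity)
      (by
        have : P / (2 * l2norm us) * (∑ i, us i ^ 2) > 0 := by positivity
        rw [husb]; linarith)
    have hεus : P / (2 * l2norm us) * l2norm us = P / 2 := by field_simp
    rw [hεus] at hstep
    rcases max_cases (l2norm c / l2norm us) (P / 2) with ⟨heq, _⟩ | ⟨heq, _⟩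
    · rw [heq] at hstep
      have hPc : P * l2norm us ≤ l2norm c := (le_div_iff₀ hus).mp hstep
      have : l2norm us * P ≤ l2norm c := by rw [mul_comm]; exact hPc
      exact finish1 (this.trans hcN)
    · rw [heq] at hstep; linarith
  · -- case F < 0
    have hxs : 0 < ∑ j, xs j ^ 2 := by
      by_contra hq
      push_neg at hq
      have hz : ∀ j, xs j = 0 := by
        intro j
        have h1 : (∑ j, xs j ^ 2) = 0 :=
          le_antisymm hq (Finset.sum_nonneg fun i _ => sq_nonneg _)
        have := (Finset.sum_eq_zero_iff_of_nonneg
          (fun i _ => sq_nonneg (xs i))).mp h1 j (Finset.mem_univ j)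
        exact pow_eq_zero_iff (by norm_num) |>.mp this
      have : rdot c xs = 0 := by
        unfold rdot; apply Finset.sum_eq_zero; intro j _; rw [hz j]; ring
      rw [hstrong] at this
      linarith
    set Pxs : ℝ := ∑ j, xs j ^ 2 with hPxs
    have hxsn : 0 < l2norm xs := Real.sqrt_pos.mpr hxs
    -- dual perturbation: shows l2norm xs * D ≤ l2norm b
    have hdualstep : l2norm xs * D ≤ l2norm b := by
      set dA : Matrix ι κ ℝ := fun i j => (1/Pxs) * ((-(b i)) * xs j) with hdA
      have hinf : ¬ DualFeasible (A + dA) (c + 0) := by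
        rintro ⟨u, hu⟩
        have hzero : (A + dA).mulVec xs = 0 := by
          funext i
          simp only [Matrix.mulVec, dotProduct, Matrix.add_apply]
          simp only [hdA]
          have : ∀ j, (A i j + 1/Pxs * (-b i * xs j)) * xs j
              = A i j * xs j - (1/Pxs * b i) * xs j ^ 2 := by intro j; ring
          simp only [this, Finset.sum_sub_distrib, ← Finset.mul_sum, ← hPxs]
          have hAxs : ∑ j, A i j * xs j = b i := by
            have := congrFun hpfeas i
            simpa [Matrix.mulVec, dotProduct] using this
          rw [hAxs]
          field_simp
          simp
        have e1 : rdot u ((A + dA).mulVec xs) = 0 := by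
          rw [hzero]; simp [rdot]
        rw [rdot_mulVec] at e1
        have e2 : rdot ((A + dA)ᵀ.mulVec u) xs ≤ rdot c xs := by
          apply Finset.sum_le_sum
          intro j _
          have := hu j
          simp only [Pi.add_apply, Pi.zero_apply, add_zero] at this
          exact mul_le_mul_of_nonneg_right this (hppos j)
        rw [e1] at e2
        rw [hstrong] at e2
        linarith
      have h := distDual_le A dA b 0 c 0 hinf
      have hfro : frobNorm dA = l2norm b / l2norm xs := by
        rw [hdA, frobNorm_rank_one (fun i => -(b i)) xs (1/Pxs) (by positivity)]
        have hl : l2norm (fun i => -(b i)) = l2norm b := l2norm_neg b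
        rw [hl]
        have : Pxs = l2norm xs ^ 2 := (l2norm_sq xs).symm
        rw [this]
        field_simp
      have hdn : dnorm dA 0 0 = l2norm b / l2norm xs := by
        have e : dnorm dA 0 0
            = max (frobNorm dA) (max (l2norm (0 : ι → ℝ)) (l2norm (0 : κ → ℝ))) := rfl
        rw [e, hfro, l2norm_zero, l2norm_zero]
        exact max_eq_left
          (by simpa using div_nonneg (l2norm_nonneg b) (l2norm_nonneg xs))
      rw [hdn] at h
      have hDb : D * l2norm xs ≤ l2norm b := (le_div_iff₀ hxsn).mp h
      rw [mul_comm]; exact hDb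
    have hFbound : -F ≤ l2norm c * l2norm xs := by
      have : -F = -(rdot c xs) := by rw [hstrong, hFdef]
      rw [this]
      have := abs_rdot_le c xs
      have h2 := neg_abs_le (rdot c xs)
      linarith [abs_rdot_le c xs]
    -- primal step with bigger ε
    set ε : ℝ := (-F) / (∑ i, us i ^ 2) + P / (2 * l2norm us) with hε
    have hεpos : 0 < ε := by
      have h1 : 0 < (-F) / (∑ i, us i ^ 2) := div_pos (by linarith) hQ
      have h2 : 0 < P / (2 * l2norm us) := div_pos hP0 (by linarith)
      rw [hε]
      exact add_pos h1 h2
    have hstep := primal_step A b c us hdfeas hQ ε hεpos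
      (by
        rw [husb, hε]
        have hQne : (∑ i, us i ^ 2) ≠ 0 := ne_of_gt hQ
        have : ((-F) / (∑ i, us i ^ 2) + P / (2 * l2norm us)) * (∑ i, us i ^ 2)
            = -F + P / (2 * l2norm us) * (∑ i, us i ^ 2) := by
          field_simp
        rw [this]
        have : 0 < P / (2 * l2norm us) * (∑ i, us i ^ 2) := by positivity
        linarith)
    have hεus : ε * l2norm us = (-F) / l2norm us + P / 2 := by
      rw [hε]
      have : (∑ i, us i ^ 2) = l2norm us ^ 2 := (l2norm_sq us).symm
      rw [this]
      field_simp
    rw [hεus] at hstep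
    rcases max_cases (l2norm c / l2norm us) ((-F) / l2norm us + P / 2) with
      ⟨heq, _⟩ | ⟨heq, _⟩
    · rw [heq] at hstep
      have hPc : P * l2norm us ≤ l2norm c := (le_div_iff₀ hus).mp hstep
      have : l2norm us * P ≤ l2norm c := by rw [mul_comm]; exact hPc
      exact finish1 (this.trans hcN)
    · rw [heq] at hstep
      -- P ≤ -F/‖us‖ + P/2  ⇒  ‖us‖ * P ≤ 2(-F)
      have h1 : P / 2 ≤ (-F) / l2norm us := by linarith
      have h2 : l2norm us * P ≤ 2 * (-F) := by
        rw [div_le_div_iff₀ (by norm_num) hus] at h1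
        linarith
      have h3 : l2norm us * (P * D) ≤ 2 * ((-F) * D) := by
        have := mul_le_mul_of_nonneg_right h2 hD0.le
        calc l2norm us * (P * D) = (l2norm us * P) * D := by ring
          _ ≤ (2 * (-F)) * D := this
          _ = 2 * ((-F) * D) := by ring
      have h4 : (-F) * D ≤ l2norm c * (l2norm xs * D) := by
        have := mul_le_mul_of_nonneg_right hFbound hD0.le
        calc (-F) * D ≤ (l2norm c * l2norm xs) * D := this
          _ = l2norm c * (l2norm xs * D) := by ring
      have h5 : l2norm c * (l2norm xs * D) ≤ N * N := by
        apply mul_le_mul hcN (hdualstep.trans hbN)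
          (mul_nonneg (l2norm_nonneg xs) hD0.le) hN0
      nlinarith

lemma distDual_empty [IsEmpty κ] (A : Matrix ι κ ℝ) (b : ι → ℝ) (c : κ → ℝ) :
    distDual A b c = 0 := by
  unfold distDual
  have : { r : ℝ | ∃ (dA : Matrix ι κ ℝ) (db : ι → ℝ) (dc : κ → ℝ),
      ¬ DualFeasible (A + dA) (c + dc) ∧ r = dnorm dA db dc } = ∅ := by
    rw [Set.eq_empty_iff_forall_notMem]
    rintro x ⟨dA, db, dc, hinf, _⟩
    exact hinf ⟨0, fun j => (IsEmpty.false j).elim⟩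
  rw [this, Real.sInf_empty]

lemma t_bound (t C : ℝ) (ht : 0 ≤ t) (hC : 0 ≤ C) (h : t^2/2 ≤ C^2/2 + C*t) :
    t ≤ 3*C := by nlinarith [sq_nonneg (t - 3*C)]


end AuxLemmas

set_option maxHeartbeats 1000000 in
/-- Corollary mp: bound on `|cᵀx* − cᵀx(β)|` under the lower bound on β. -/
theorem qp_penalty_objective_bound
    {m n : ℕ} (A : Matrix (Fin m) (Fin n) ℝ) (b : Fin m → ℝ) (c : Fin n → ℝ)
    (hrank : A.rank = m)
    (ub : Fin m → ℝ) (xb : Fin n → ℝ) (β : ℝ) (hβ : 0 < β)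
    (hP : 0 < deltaP A b c) (hD : 0 < deltaD A b c)
    -- (x*, u*) : a primal–dual optimal pair
    (xs : Fin n → ℝ) (us : Fin m → ℝ)
    (hpfeas : A.mulVec xs = b) (hppos : ∀ j, 0 ≤ xs j)
    (hdfeas : ∀ j, 0 ≤ (c - Aᵀ.mulVec us) j)
    (hstrong : rdot c xs = rdot b us)
    (Cs : ℝ) (hCs : Cs = max (l2norm (xs - xb)) (l2norm (us - ub)))
    -- x(β) : the minimizer of f_β over the nonnegative orthant
    (xβ : Fin n → ℝ) (hβnn : ∀ j, 0 ≤ xβ j)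
    (hβmin : ∀ x : Fin n → ℝ, (∀ j, 0 ≤ x j) →
      fpen A b c ub xb β xβ ≤ fpen A b c ub xb β x)
    -- bound on β
    (hβbig : 10 * Cs / (dnorm A b c * min (deltaP A b c) (deltaD A b c)) ≤ β) :
    |rdot c xs - rdot c xβ| ≤ (1 / β) *
      (25 * Cs / (2 * deltaP A b c * deltaD A b c) + 6 * Cs ^ 2
        + Real.sqrt 6 * l2norm xb * Cs) := by
  classical
  have hNnn : 0 ≤ dnorm A b c := dnorm_nonneg A b c
  have hNpos : 0 < dnorm A b c := by
    rcases eq_or_lt_of_le hNnn with h | h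
    · exfalso; rw [deltaP, ← h, div_zero] at hP; exact lt_irrefl 0 hP
    · exact h
  have hPpos : 0 < distPri A b c := by
    have h := hP; rw [deltaP] at h
    rcases div_pos_iff.mp h with ⟨h1, _⟩ | ⟨_, h2⟩
    · exact h1
    · linarith
  have hDpos : 0 < distDual A b c := by
    have h := hD; rw [deltaD] at h
    rcases div_pos_iff.mp h with ⟨h1, _⟩ | ⟨_, h2⟩
    · exact h1
    · linarith
  have hn : Nonempty (Fin n) := by
    rcases Nat.eq_zero_or_pos n with h | h
    · exfalso
      subst h
      rw [distDual_empty A b c] at hDpos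
      exact lt_irrefl 0 hDpos
    · exact ⟨⟨0, h⟩⟩
  have hD2N := distDual_le_two_dnorm A b c hDpos
  have hU := norm_dual_opt_le A b c xs us hpfeas hppos hdfeas hstrong hPpos hDpos hD2N
  have hCs0 : 0 ≤ Cs := by
    rw [hCs]; exact le_trans (l2norm_nonneg _) (le_max_left _ _)
  have hxsC : l2norm (xs - xb) ≤ Cs := hCs ▸ le_max_left _ _
  have husC : l2norm (us - ub) ≤ Cs := hCs ▸ le_max_right _ _
  set r : Fin m → ℝ := A.mulVec xβ - b with hr
  set ρ := l2norm r with hρ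
  have hρ0 : 0 ≤ ρ := l2norm_nonneg r
  set F := rdot c xs with hF
  have hfs : fpen A b c ub xb β xs = F + (1/(2*β)) * l2norm (xs - xb)^2 := by
    unfold fpen
    have hz : A.mulVec xs - b = 0 := by rw [hpfeas]; exact sub_self b
    rw [hz, l2norm_zero]
    have h0 : rdot ub (0 : Fin m → ℝ) = 0 := by simp [rdot]
    rw [h0, hF]
    ring
  have hmin : fpen A b c ub xb β xβ ≤ F + (1/(2*β)) * Cs^2 := by
    have h1 := hβmin xs hppos
    rw [hfs] at h1
    have h2 : l2norm (xs - xb)^2 ≤ Cs^2 := pow_le_pow_left₀ (l2norm_nonneg _) hxsC 2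
    have h3 : (0:ℝ) < 1/(2*β) := by positivity
    have h4 := mul_le_mul_of_nonneg_left h2 h3.le
    linarith
  have hfx : fpen A b c ub xb β xβ
      = rdot c xβ - rdot ub r + (β/2) * ρ^2 + (1/(2*β)) * l2norm (xβ - xb)^2 := by
    unfold fpen
    rw [hr, hρ]
  rw [hfx] at hmin
  have h5 : F + rdot us r ≤ rdot c xβ := by
    have e1 : rdot us (A.mulVec xβ) = rdot (Aᵀ.mulVec us) xβ := rdot_mulVec A us xβ
    have e2 : rdot us (A.mulVec xβ) = rdot us r + rdot us b := by
      have h : ∀ i, us i * (A.mulVec xβ) i = us i * r i + us i * b i := by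
        intro i; rw [hr]; simp only [Pi.sub_apply]; ring
      simp only [rdot, h, Finset.sum_add_distrib]
    have e3 : rdot (Aᵀ.mulVec us) xβ ≤ rdot c xβ := by
      apply Finset.sum_le_sum; intro j _
      have hj := hdfeas j; simp only [Pi.sub_apply] at hj
      exact mul_le_mul_of_nonneg_right (by linarith) (hβnn j)
    have e4 : rdot us b = F := by rw [rdot_comm us b, ← hstrong]
    linarith
  have hCS1 : rdot (ub - us) r ≤ Cs * ρ := by
    have h1 := rdot_le (ub - us) r
    rw [l2norm_neg_sub ub us] at h1
    calc rdot (ub - us) r ≤ l2norm (us - ub) * ρ := h1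
      _ ≤ Cs * ρ := mul_le_mul_of_nonneg_right husC hρ0
  have hsub : rdot (ub - us) r = rdot ub r - rdot us r := rdot_sub_left ub us r
  have hL2 : (0:ℝ) ≤ l2norm (xβ - xb)^2 := sq_nonneg _
  have hL2' : (0:ℝ) ≤ (1/(2*β)) * l2norm (xβ - xb)^2 :=
    mul_nonneg (by positivity) hL2
  have hKEY : (β/2)*ρ^2 ≤ (1/(2*β))*Cs^2 + Cs*ρ := by linarith
  have hρβ : β * ρ ≤ 3 * Cs := by
    have hmul := mul_le_mul_of_nonneg_left hKEY (le_of_lt hβ)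
    have hid : β * ((1/(2*β))*Cs^2 + Cs*ρ) = Cs^2/2 + Cs*(β*ρ) := by
      field_simp
    rw [hid] at hmul
    have e1 : β * ((β/2)*ρ^2) = (β*ρ)^2/2 := by ring
    rw [e1] at hmul
    exact t_bound _ _ (mul_nonneg hβ.le hρ0) hCs0 hmul
  have hAbs : |rdot us r| ≤ l2norm us * ρ := abs_rdot_le us r
  have hβρ2 : (0:ℝ) ≤ (β/2)*ρ^2 := by positivity
  have hdirA : F - rdot c xβ ≤ l2norm us * ρ := by
    have h1 : -(rdot us r) ≤ |rdot us r| := neg_le_abs _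
    linarith
  have hdirB : rdot c xβ - F ≤ (1/(2*β))*Cs^2 + Cs*ρ + l2norm us * ρ := by
    have h1 : rdot us r ≤ |rdot us r| := le_abs_self _
    linarith
  have habs : |F - rdot c xβ| ≤ (1/(2*β))*Cs^2 + Cs*ρ + l2norm us * ρ := by
    have hCsρ : 0 ≤ Cs * ρ := mul_nonneg hCs0 hρ0
    have hfrac : (0:ℝ) ≤ (1/(2*β))*Cs^2 := by positivity
    rw [abs_le]
    constructor
    · linarith
    · linarith
  obtain ⟨P0, hP0eq⟩ : ∃ x, x = distPri A b c := ⟨_, rfl⟩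
  obtain ⟨D0, hD0eq⟩ : ∃ x, x = distDual A b c := ⟨_, rfl⟩
  obtain ⟨N0, hN0eq⟩ : ∃ x, x = dnorm A b c := ⟨_, rfl⟩
  have hdp : deltaP A b c = P0 / N0 := by rw [deltaP, hP0eq, hN0eq]
  have hdd : deltaD A b c = D0 / N0 := by rw [deltaD, hD0eq, hN0eq]
  rw [← hP0eq] at hU hPpos
  rw [← hD0eq] at hU hDpos
  rw [← hN0eq] at hU hNpos
  rw [hdp, hdd]
  have hPD : 0 < P0 * D0 := mul_pos hPpos hDpos
  set G := Cs * N0^2 / (P0 * D0) with hGdef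
  have hG0 : 0 ≤ G := by
    rw [hGdef]
    exact div_nonneg (mul_nonneg hCs0 (sq_nonneg _)) hPD.le
  have h25 : 25 * Cs / (2 * (P0/N0) * (D0/N0)) = (25/2) * G := by
    rw [hGdef]
    field_simp
  have hβusρ : β * (l2norm us * ρ) ≤ 6 * G := by
    have t1 : (l2norm us * (P0 * D0)) * (β*ρ) ≤ (2*N0^2)*(3*Cs) :=
      mul_le_mul hU hρβ (mul_nonneg hβ.le hρ0) (by positivity)
    have t2 : β*(l2norm us * ρ)*(P0 * D0) ≤ 6*(Cs*N0^2) := by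
      have e : β*(l2norm us * ρ)*(P0 * D0) = (l2norm us * (P0 * D0))*(β*ρ) := by ring
      rw [e]
      linarith
    calc β*(l2norm us*ρ)
        = (β*(l2norm us*ρ)*(P0 * D0))/(P0 * D0) := by field_simp
      _ ≤ (6*(Cs*N0^2))/(P0 * D0) := by gcongr
      _ = 6*G := by rw [hGdef, mul_div_assoc]
  have hβCsρ : β * (Cs * ρ) ≤ 3 * Cs^2 := by
    have h := mul_le_mul_of_nonneg_left hρβ hCs0
    calc β*(Cs*ρ) = Cs*(β*ρ) := by ring
      _ ≤ Cs*(3*Cs) := h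
      _ = 3*Cs^2 := by ring
  have h3 : 0 ≤ Real.sqrt 6 * l2norm xb * Cs :=
    mul_nonneg (mul_nonneg (Real.sqrt_nonneg 6) (l2norm_nonneg xb)) hCs0
  have hfinal : β * |F - rdot c xβ|
      ≤ (25/2)*G + 6*Cs^2 + Real.sqrt 6 * l2norm xb * Cs := by
    have h1 : β * |F - rdot c xβ|
        ≤ β*((1/(2*β))*Cs^2) + β*(Cs*ρ) + β*(l2norm us*ρ) := by
      have h := mul_le_mul_of_nonneg_left habs hβ.le
      have e : β*((1/(2*β))*Cs^2 + Cs*ρ + l2norm us * ρ)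
          = β*((1/(2*β))*Cs^2) + β*(Cs*ρ) + β*(l2norm us*ρ) := by ring
      linarith
    have h2 : β*((1/(2*β))*Cs^2) = Cs^2/2 := by field_simp
    rw [h2] at h1
    linarith [sq_nonneg Cs]
  rw [h25]
  have hβinv : |F - rdot c xβ| = (1/β)*(β*|F - rdot c xβ|) := by field_simp
  rw [hβinv]
  exact mul_le_mul_of_nonneg_left hfinal (by positivity)
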